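/- Let t₀ < t_f, M ≥ 0, let A_ℓ, Ã ∈ L²(t₀,t_f;ℝ^{m×n}) with A_ℓ → Ã strongly in L²(t₀,t_f;ℝ^{m×n}), and let u_ℓ, ũ ∈ L²(t₀,t_f;ℝⁿ) with u_ℓ → ũ weakly in L²(t₀,t_f;ℝⁿ) and ‖u_ℓ(t)‖₂ ≤ M for a.e. t ∈ [t₀,t_f] and all ℓ. Then the products A_ℓ u_ℓ converge weakly to Ã ũ in L²(t₀,t_f;ℝ^m). -/

import Mathlib

open MeasureTheory Set Filter Metric Topology
open scoped RealInnerProductSpace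

open Matrix

/-- Matrix–vector multiplication for Euclidean-space vectors. -/
noncomputable def mulVecE {m n : ℕ} (M : Matrix (Fin m) (Fin n) ℝ)
    (v : EuclideanSpace ℝ (Fin n)) : EuclideanSpace ℝ (Fin m) :=
  (WithLp.equiv 2 (Fin m → ℝ)).symm (M.mulVec ((WithLp.equiv 2 (Fin n → ℝ)) v))

/-- Frobenius norm of a real matrix. -/
noncomputable def frobNorm {m n : ℕ} (M : Matrix (Fin m) (Fin n) ℝ) : ℝ :=
  Real.sqrt (∑ i, ∑ j, (M i j) ^ 2)

section aux
variable {m n : ℕ}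

lemma frobNorm_nonneg (A : Matrix (Fin m) (Fin n) ℝ) : 0 ≤ frobNorm A := Real.sqrt_nonneg _

lemma inner_mulVecE (A : Matrix (Fin m) (Fin n) ℝ) (u : EuclideanSpace ℝ (Fin n))
    (w : EuclideanSpace ℝ (Fin m)) : ⟪mulVecE A u, w⟫ = ⟪u, mulVecE Aᵀ w⟫ := by
  simp only [mulVecE, PiLp.inner_apply, RCLike.inner_apply, conj_trivial,
    WithLp.equiv_symm_apply, WithLp.equiv_apply, WithLp.ofLp_toLp, Matrix.mulVec, dotProduct,
    Matrix.transpose_apply, Finset.sum_mul, Finset.mul_sum]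
  rw [Finset.sum_comm]
  exact Finset.sum_congr rfl fun j _ => Finset.sum_congr rfl fun i _ => by ring

lemma norm_mulVecE_le (A : Matrix (Fin m) (Fin n) ℝ) (v : EuclideanSpace ℝ (Fin n)) :
    ‖mulVecE A v‖ ≤ frobNorm A * ‖v‖ := by
  rw [frobNorm, EuclideanSpace.norm_eq, EuclideanSpace.norm_eq]
  simp only [Real.norm_eq_abs, sq_abs]
  rw [← Real.sqrt_mul (by positivity)]
  apply Real.sqrt_le_sqrt
  rw [Finset.sum_mul]
  apply Finset.sum_le_sum
  intro i _
  have : mulVecE A v i = ∑ j, A i j * v j := rfl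
  rw [this]
  exact Finset.sum_mul_sq_le_sq_mul_sq _ _ _

lemma frobNorm_transpose (A : Matrix (Fin m) (Fin n) ℝ) : frobNorm Aᵀ = frobNorm A := by
  rw [frobNorm, frobNorm, Finset.sum_comm]
  rfl

lemma mulVecE_sub_left (A B : Matrix (Fin m) (Fin n) ℝ) (v : EuclideanSpace ℝ (Fin n)) :
    mulVecE (A - B) v = mulVecE A v - mulVecE B v := by
  simp [mulVecE, Matrix.sub_mulVec]

lemma continuous_mulVecE :
    Continuous (fun p : Matrix (Fin m) (Fin n) ℝ × EuclideanSpace ℝ (Fin n) =>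
      mulVecE p.1 p.2) := by
  apply (PiLp.continuous_toLp ..).comp
  exact Continuous.matrix_mulVec continuous_fst ((PiLp.continuous_ofLp ..).comp continuous_snd)

lemma continuous_frobNorm : Continuous (frobNorm : Matrix (Fin m) (Fin n) ℝ → ℝ) := by
  unfold frobNorm
  apply Real.continuous_sqrt.comp
  apply continuous_finset_sum
  intro i _
  apply continuous_finset_sum
  intro j _
  exact ((continuous_apply j).comp (continuous_apply i)).pow 2

noncomputable def matEuc (A : Matrix (Fin m) (Fin n) ℝ) : EuclideanSpace ℝ (Fin m × Fin n) :=
  (WithLp.equiv 2 _).symm fun p => A p.1 p.2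

lemma frobNorm_eq (A : Matrix (Fin m) (Fin n) ℝ) : frobNorm A = ‖matEuc A‖ := by
  rw [frobNorm, EuclideanSpace.norm_eq]
  rw [Fintype.sum_prod_type]
  simp [matEuc, Real.norm_eq_abs, sq_abs]

lemma matEuc_sub (A B : Matrix (Fin m) (Fin n) ℝ) : matEuc (A - B) = matEuc A - matEuc B := by
  simp [matEuc]
  rfl

lemma continuous_matEuc : Continuous (matEuc : Matrix (Fin m) (Fin n) ℝ → _) := by
  apply (PiLp.continuous_toLp ..).comp
  exact continuous_pi fun p => (continuous_apply p.2).comp (continuous_apply p.1)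

end aux

section aux2
variable {α : Type*} {mα : MeasurableSpace α} {μ : Measure α}
variable {E : Type*} [NormedAddCommGroup E] [InnerProductSpace ℝ E]

lemma inner_integrable' {f g : α → E} (hf : MemLp f 2 μ) (hg : MemLp g 2 μ) :
    Integrable (fun t => ⟪f t, g t⟫) μ := by
  have h := L2.integrable_inner (𝕜 := ℝ) (hf.toLp f) (hg.toLp g)
  refine h.congr ?_
  filter_upwards [hf.coeFn_toLp, hg.coeFn_toLp] with t h1 h2
  rw [h1, h2]

lemma integrable_mul_of_memL2 {f g : α → ℝ} (hf : MemLp f 2 μ) (hg : MemLp g 2 μ) :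
    Integrable (fun t => f t * g t) μ := by
  have := inner_integrable' (E := ℝ) hf hg
  simpa [RCLike.inner_apply, mul_comm] using this

lemma integral_mul_le_sqrt {f g : α → ℝ} (hf0 : 0 ≤ᵐ[μ] f) (hg0 : 0 ≤ᵐ[μ] g)
    (hf : MemLp f 2 μ) (hg : MemLp g 2 μ) :
    ∫ a, f a * g a ∂μ ≤ Real.sqrt (∫ a, f a ^ 2 ∂μ) * Real.sqrt (∫ a, g a ^ 2 ∂μ) := by
  have hpq : Real.HolderConjugate 2 2 := by constructor <;> norm_num
  have h2 : ENNReal.ofReal (2:ℝ) = 2 := by norm_num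
  have h := integral_mul_le_Lp_mul_Lq_of_nonneg hpq hf0 hg0 (by rwa [h2]) (by rwa [h2])
  calc ∫ a, f a * g a ∂μ
      ≤ (∫ a, f a ^ (2:ℝ) ∂μ) ^ ((1:ℝ)/2) * (∫ a, g a ^ (2:ℝ) ∂μ) ^ ((1:ℝ)/2) := h
    _ = Real.sqrt (∫ a, f a ^ 2 ∂μ) * Real.sqrt (∫ a, g a ^ 2 ∂μ) := by
        rw [Real.sqrt_eq_rpow, Real.sqrt_eq_rpow]
        norm_num

lemma tendsto_of_approx {f : ℕ → ℝ} {g : ℕ → ℕ → ℝ} {c : ℕ → ℝ}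
    (hg : ∀ k, Tendsto (g k) atTop (𝓝 0)) (hc : Tendsto c atTop (𝓝 0))
    (hfg : ∀ k ℓ, |f ℓ - g k ℓ| ≤ c k) : Tendsto f atTop (𝓝 0) := by
  rw [NormedAddCommGroup.tendsto_nhds_zero]
  intro ε hε
  have hck : ∀ᶠ k in atTop, |c k| < ε/2 := by
    have := (NormedAddCommGroup.tendsto_nhds_zero.mp hc) (ε/2) (by linarith)
    simpa using this
  obtain ⟨k, hk⟩ := hck.exists
  have hgk : ∀ᶠ ℓ in atTop, |g k ℓ| < ε/2 := by
    have := (NormedAddCommGroup.tendsto_nhds_zero.mp (hg k)) (ε/2) (by linarith)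
    simpa using this
  filter_upwards [hgk] with ℓ hℓ
  have h1 := hfg k ℓ
  have h2 : c k ≤ |c k| := le_abs_self _
  simp only [Real.norm_eq_abs]
  calc |f ℓ| ≤ |f ℓ - g k ℓ| + |g k ℓ| := by
        have := abs_add_le (f ℓ - g k ℓ) (g k ℓ); simpa using this
    _ < ε := by linarith

lemma norm_le_of_weak [IsFiniteMeasure μ] {M : ℝ} (hM : 0 ≤ M)
    {ul : ℕ → α → E} {ut : α → E}
    (hul : ∀ ℓ, MemLp (ul ℓ) 2 μ) (hut : MemLp ut 2 μ)
    (hbound : ∀ ℓ, ∀ᵐ t ∂μ, ‖ul ℓ t‖ ≤ M)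
    (hweak : ∀ v : α → E, MemLp v 2 μ →
      Tendsto (fun ℓ => ∫ t, ⟪ul ℓ t, v t⟫ ∂μ) atTop (𝓝 (∫ t, ⟪ut t, v t⟫ ∂μ))) :
    ∀ᵐ t ∂μ, ‖ut t‖ ≤ M := by
  have hm := hut.1
  set g := hm.mk ut with hgdef
  have hsm : StronglyMeasurable g := hm.stronglyMeasurable_mk
  have hgeq : ut =ᵐ[μ] g := hm.ae_eq_mk
  have hgL2 : MemLp g 2 μ := hut.ae_eq hgeq
  set s : Set α := {t | M < ‖g t‖} with hsdef
  have hs : MeasurableSet s := measurableSet_lt measurable_const hsm.norm.measurable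
  set v := s.indicator g with hvdef
  have hvsm : StronglyMeasurable v := hsm.indicator hs
  have hvle : ∀ t, ‖v t‖ ≤ ‖g t‖ := fun t => norm_indicator_le_norm_self g t
  have hv : MemLp v 2 μ := hgL2.of_le hvsm.aestronglyMeasurable
    (Eventually.of_forall fun t => hvle t)
  have hvint : Integrable (fun t => ‖v t‖) μ := (hv.integrable one_le_two).norm
  have h1 : ∀ ℓ, ∫ t, ⟪ul ℓ t, v t⟫ ∂μ ≤ M * ∫ t, ‖v t‖ ∂μ := by
    intro ℓ
    rw [← integral_const_mul]
    refine integral_mono_ae (inner_integrable' (hul ℓ) hv) (hvint.const_mul M) ?_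
    filter_upwards [hbound ℓ] with t hb
    calc ⟪ul ℓ t, v t⟫ ≤ ‖ul ℓ t‖ * ‖v t‖ := real_inner_le_norm _ _
      _ ≤ M * ‖v t‖ := mul_le_mul_of_nonneg_right hb (norm_nonneg _)
  have h2 : ∫ t, ⟪ut t, v t⟫ ∂μ ≤ M * ∫ t, ‖v t‖ ∂μ :=
    le_of_tendsto (hweak v hv) (Eventually.of_forall h1)
  have h3 : ∫ t, ⟪ut t, v t⟫ ∂μ = ∫ t, ‖v t‖^2 ∂μ := by
    apply integral_congr_ae
    filter_upwards [hgeq] with t h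
    rw [h]
    by_cases hts : t ∈ s
    · simp only [hvdef, Set.indicator_of_mem hts]
      exact real_inner_self_eq_norm_sq _
    · simp [hvdef, Set.indicator_of_notMem hts]
  have hsq_int : Integrable (fun t => ‖v t‖^2) μ := hv.norm.integrable_sq
  have h5 : 0 ≤ᵐ[μ] fun t => ‖v t‖^2 - M * ‖v t‖ := by
    refine Eventually.of_forall fun t => ?_
    by_cases hts : t ∈ s
    · have hvt : v t = g t := Set.indicator_of_mem hts g
      have hgt : M < ‖g t‖ := hts
      simp only [Pi.zero_apply, hvt]
      nlinarith [norm_nonneg (g t)]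
    · have hvt : v t = 0 := Set.indicator_of_notMem hts g
      simp [hvt]
  have h4 : ∫ t, (‖v t‖^2 - M * ‖v t‖) ∂μ ≤ 0 := by
    rw [integral_sub hsq_int (hvint.const_mul M), integral_const_mul]
    rw [h3] at h2
    linarith
  have h6 : (fun t => ‖v t‖^2 - M * ‖v t‖) =ᵐ[μ] 0 :=
    (integral_eq_zero_iff_of_nonneg_ae h5 (hsq_int.sub (hvint.const_mul M))).1
      (le_antisymm h4 (integral_nonneg_of_ae h5))
  filter_upwards [h6, hgeq] with t ht hteq
  rw [hteq]
  by_contra hlt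
  push_neg at hlt
  have hts : t ∈ s := hlt
  have hvt : v t = g t := Set.indicator_of_mem hts g
  have ht' : ‖g t‖^2 - M * ‖g t‖ = 0 := by
    have h := ht
    simp only [hvt] at h
    simpa using h
  nlinarith [hlt, hM]

end aux2
set_option maxHeartbeats 2000000 in
/-- strong `L²` convergence of the matrices times weak `L²`
convergence of uniformly bounded vectors gives weak `L²` convergence of the products. -/
theorem stmt9
    (m n : ℕ) (t0 tf M : ℝ) (ht : t0 < tf) (hM : 0 ≤ M)
    (Al : ℕ → ℝ → Matrix (Fin m) (Fin n) ℝ) (At : ℝ → Matrix (Fin m) (Fin n) ℝ)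
    -- `A_ℓ, Ã ∈ L²(t₀,t_f;ℝ^{m×n})`
    (hAlmeas : ∀ ℓ, AEStronglyMeasurable (Al ℓ) (volume.restrict (Ioc t0 tf)))
    (hAtmeas : AEStronglyMeasurable At (volume.restrict (Ioc t0 tf)))
    (hAlL2 : ∀ ℓ, Integrable (fun t => frobNorm (Al ℓ t) ^ 2) (volume.restrict (Ioc t0 tf)))
    (hAtL2 : Integrable (fun t => frobNorm (At t) ^ 2) (volume.restrict (Ioc t0 tf)))
    -- `A_ℓ → Ã` strongly in `L²`
    (hAconv : Tendsto (fun ℓ => ∫ t in Ioc t0 tf, frobNorm (Al ℓ t - At t) ^ 2)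
      atTop (𝓝 0))
    (ul : ℕ → ℝ → EuclideanSpace ℝ (Fin n)) (ut : ℝ → EuclideanSpace ℝ (Fin n))
    (hul : ∀ ℓ, MemLp (ul ℓ) 2 (volume.restrict (Ioc t0 tf)))
    (hut : MemLp ut 2 (volume.restrict (Ioc t0 tf)))
    -- `‖u_ℓ(t)‖₂ ≤ M` a.e.
    (hbound : ∀ ℓ, ∀ᵐ t ∂(volume.restrict (Ioc t0 tf)), ‖ul ℓ t‖ ≤ M)
    -- `u_ℓ ⇀ ũ` weakly in `L²`
    (hweak : ∀ v : ℝ → EuclideanSpace ℝ (Fin n),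
      MemLp v 2 (volume.restrict (Ioc t0 tf)) →
      Tendsto (fun ℓ => ∫ t, ⟪ul ℓ t, v t⟫ ∂(volume.restrict (Ioc t0 tf))) atTop
        (𝓝 (∫ t, ⟪ut t, v t⟫ ∂(volume.restrict (Ioc t0 tf))))) :
    -- conclusion: `A_ℓ u_ℓ ⇀ Ã ũ` weakly in `L²`
    ∀ w : ℝ → EuclideanSpace ℝ (Fin m),
      MemLp w 2 (volume.restrict (Ioc t0 tf)) →
      Tendsto (fun ℓ => ∫ t, ⟪mulVecE (Al ℓ t) (ul ℓ t), w t⟫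
          ∂(volume.restrict (Ioc t0 tf))) atTop
        (𝓝 (∫ t, ⟪mulVecE (At t) (ut t), w t⟫ ∂(volume.restrict (Ioc t0 tf)))) := by
  intro w hw
  set μ := volume.restrict (Ioc t0 tf) with hμ
  haveI : IsFiniteMeasure μ := by
    constructor
    rw [hμ, Measure.restrict_apply_univ]
    exact measure_Ioc_lt_top
  -- `L²` membership of the matrix functions viewed in Euclidean space
  have hBl : ∀ ℓ, MemLp (fun t => matEuc (Al ℓ t)) 2 μ := fun ℓ =>
    (memLp_two_iff_integrable_sq_norm
      (continuous_matEuc.comp_aestronglyMeasurable (hAlmeas ℓ))).2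
      ((hAlL2 ℓ).congr (Eventually.of_forall fun t => by simp only [frobNorm_eq]))
  have hBt : MemLp (fun t => matEuc (At t)) 2 μ :=
    (memLp_two_iff_integrable_sq_norm
      (continuous_matEuc.comp_aestronglyMeasurable hAtmeas)).2
      (hAtL2.congr (Eventually.of_forall fun t => by simp only [frobNorm_eq]))
  have hfrobAt : MemLp (fun t => frobNorm (At t)) 2 μ :=
    hBt.norm.ae_eq (Eventually.of_forall fun t => (frobNorm_eq _).symm)
  have hfrobD : ∀ ℓ, MemLp (fun t => frobNorm (Al ℓ t - At t)) 2 μ := fun ℓ =>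
    ((hBl ℓ).sub hBt).norm.ae_eq
      (Eventually.of_forall fun t => by simp only [frobNorm_eq, matEuc_sub, Pi.sub_apply])
  have hfrobAl : ∀ ℓ, MemLp (fun t => frobNorm (Al ℓ t)) 2 μ := fun ℓ =>
    (hBl ℓ).norm.ae_eq (Eventually.of_forall fun t => (frobNorm_eq _).symm)
  have hwn : MemLp (fun t => ‖w t‖) 2 μ := hw.norm
  -- a.e. bound on `ut`
  have hutM : ∀ᵐ t ∂μ, ‖ut t‖ ≤ M := norm_le_of_weak hM hul hut hbound hweak
  -- measurability facts
  have hAuw : ∀ ℓ, AEStronglyMeasurable (fun t => mulVecE (Al ℓ t) (ul ℓ t)) μ := fun ℓ =>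
    continuous_mulVecE.comp_aestronglyMeasurable ((hAlmeas ℓ).prodMk (hul ℓ).1)
  have hAtuw : AEStronglyMeasurable (fun t => mulVecE (At t) (ut t)) μ :=
    continuous_mulVecE.comp_aestronglyMeasurable (hAtmeas.prodMk hut.1)
  have hDmeas : ∀ ℓ, AEStronglyMeasurable (fun t => Al ℓ t - At t) μ := fun ℓ =>
    (hAlmeas ℓ).sub hAtmeas
  have hvfull_meas : AEStronglyMeasurable (fun t => mulVecE (At t)ᵀ (w t)) μ :=
    continuous_mulVecE.comp_aestronglyMeasurable
      ((continuous_id.matrix_transpose.comp_aestronglyMeasurable hAtmeas).prodMk hw.1)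
  -- integrability of the various scalar integrands
  have hFint : ∀ ℓ, Integrable (fun t => ⟪mulVecE (Al ℓ t) (ul ℓ t), w t⟫) μ := by
    intro ℓ
    refine Integrable.mono' ((integrable_mul_of_memL2 (hfrobAl ℓ) hwn).const_mul M)
      ((hAuw ℓ).inner hw.1) ?_
    filter_upwards [hbound ℓ] with t hb
    calc ‖⟪mulVecE (Al ℓ t) (ul ℓ t), w t⟫‖
        ≤ ‖mulVecE (Al ℓ t) (ul ℓ t)‖ * ‖w t‖ := norm_inner_le_norm _ _
      _ ≤ (frobNorm (Al ℓ t) * ‖ul ℓ t‖) * ‖w t‖ :=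
          mul_le_mul_of_nonneg_right (norm_mulVecE_le _ _) (norm_nonneg _)
      _ ≤ M * (frobNorm (Al ℓ t) * ‖w t‖) := by
          nlinarith [mul_nonneg (mul_nonneg (frobNorm_nonneg (Al ℓ t)) (norm_nonneg (w t)))
            (sub_nonneg.2 hb)]
  have hGint : Integrable (fun t => ⟪mulVecE (At t) (ut t), w t⟫) μ := by
    refine Integrable.mono' ((integrable_mul_of_memL2 hfrobAt hwn).const_mul M)
      (hAtuw.inner hw.1) ?_
    filter_upwards [hutM] with t hb
    calc ‖⟪mulVecE (At t) (ut t), w t⟫‖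
        ≤ ‖mulVecE (At t) (ut t)‖ * ‖w t‖ := norm_inner_le_norm _ _
      _ ≤ (frobNorm (At t) * ‖ut t‖) * ‖w t‖ :=
          mul_le_mul_of_nonneg_right (norm_mulVecE_le _ _) (norm_nonneg _)
      _ ≤ M * (frobNorm (At t) * ‖w t‖) := by
          nlinarith [mul_nonneg (mul_nonneg (frobNorm_nonneg (At t)) (norm_nonneg (w t)))
            (sub_nonneg.2 hb)]
  have he1int : ∀ ℓ, Integrable (fun t => ⟪mulVecE (Al ℓ t - At t) (ul ℓ t), w t⟫) μ := by
    intro ℓ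
    refine Integrable.mono' ((integrable_mul_of_memL2 (hfrobD ℓ) hwn).const_mul M)
      ((continuous_mulVecE.comp_aestronglyMeasurable
        ((hDmeas ℓ).prodMk (hul ℓ).1)).inner hw.1) ?_
    filter_upwards [hbound ℓ] with t hb
    calc ‖⟪mulVecE (Al ℓ t - At t) (ul ℓ t), w t⟫‖
        ≤ ‖mulVecE (Al ℓ t - At t) (ul ℓ t)‖ * ‖w t‖ := norm_inner_le_norm _ _
      _ ≤ (frobNorm (Al ℓ t - At t) * ‖ul ℓ t‖) * ‖w t‖ :=
          mul_le_mul_of_nonneg_right (norm_mulVecE_le _ _) (norm_nonneg _)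
      _ ≤ M * (frobNorm (Al ℓ t - At t) * ‖w t‖) := by
          nlinarith [mul_nonneg (mul_nonneg (frobNorm_nonneg (Al ℓ t - At t))
            (norm_nonneg (w t))) (sub_nonneg.2 hb)]
  have he2int : ∀ ℓ, Integrable (fun t => ⟪ul ℓ t - ut t, mulVecE (At t)ᵀ (w t)⟫) μ := by
    intro ℓ
    refine Integrable.mono' ((integrable_mul_of_memL2 hfrobAt hwn).const_mul (2*M))
      (((hul ℓ).1.sub hut.1).inner hvfull_meas) ?_
    filter_upwards [hbound ℓ, hutM] with t hb1 hb2
    have hd : ‖ul ℓ t - ut t‖ ≤ 2*M := by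
      calc ‖ul ℓ t - ut t‖ ≤ ‖ul ℓ t‖ + ‖ut t‖ := norm_sub_le _ _
        _ ≤ 2*M := by linarith
    have hvf : ‖mulVecE (At t)ᵀ (w t)‖ ≤ frobNorm (At t) * ‖w t‖ := by
      have := norm_mulVecE_le (At t)ᵀ (w t)
      rwa [frobNorm_transpose] at this
    calc ‖⟪ul ℓ t - ut t, mulVecE (At t)ᵀ (w t)⟫‖
        ≤ ‖ul ℓ t - ut t‖ * ‖mulVecE (At t)ᵀ (w t)‖ := norm_inner_le_norm _ _
      _ ≤ (2*M) * (frobNorm (At t) * ‖w t‖) := by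
          apply mul_le_mul hd hvf (norm_nonneg _) (by linarith)
  -- abbreviations
  set E1 : ℕ → ℝ := fun ℓ => ∫ t, ⟪mulVecE (Al ℓ t - At t) (ul ℓ t), w t⟫ ∂μ with hE1def
  set E2 : ℕ → ℝ := fun ℓ => ∫ t, ⟪ul ℓ t - ut t, mulVecE (At t)ᵀ (w t)⟫ ∂μ with hE2def
  -- pointwise decomposition
  have hdecomp : ∀ ℓ t, ⟪mulVecE (Al ℓ t) (ul ℓ t), w t⟫ =
      ⟪mulVecE (At t) (ut t), w t⟫ +
        (⟪mulVecE (Al ℓ t - At t) (ul ℓ t), w t⟫ + ⟪ul ℓ t - ut t, mulVecE (At t)ᵀ (w t)⟫) := by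
    intro ℓ t
    have h1 : ⟪mulVecE (Al ℓ t - At t) (ul ℓ t), w t⟫ =
        ⟪mulVecE (Al ℓ t) (ul ℓ t), w t⟫ - ⟪mulVecE (At t) (ul ℓ t), w t⟫ := by
      rw [mulVecE_sub_left, inner_sub_left]
    have h2 : ⟪ul ℓ t - ut t, mulVecE (At t)ᵀ (w t)⟫ =
        ⟪mulVecE (At t) (ul ℓ t), w t⟫ - ⟪mulVecE (At t) (ut t), w t⟫ := by
      rw [inner_sub_left, ← inner_mulVecE, ← inner_mulVecE]
    rw [h1, h2]; ring
  have hint_eq : ∀ ℓ, ∫ t, ⟪mulVecE (Al ℓ t) (ul ℓ t), w t⟫ ∂μ =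
      (∫ t, ⟪mulVecE (At t) (ut t), w t⟫ ∂μ) + (E1 ℓ + E2 ℓ) := by
    intro ℓ
    rw [hE1def, hE2def]
    calc ∫ t, ⟪mulVecE (Al ℓ t) (ul ℓ t), w t⟫ ∂μ
        = ∫ t, (⟪mulVecE (At t) (ut t), w t⟫ +
            (⟪mulVecE (Al ℓ t - At t) (ul ℓ t), w t⟫ +
              ⟪ul ℓ t - ut t, mulVecE (At t)ᵀ (w t)⟫)) ∂μ :=
          integral_congr_ae (Eventually.of_forall fun t => hdecomp ℓ t)
      _ = (∫ t, ⟪mulVecE (At t) (ut t), w t⟫ ∂μ) +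
            ∫ t, (⟪mulVecE (Al ℓ t - At t) (ul ℓ t), w t⟫ +
              ⟪ul ℓ t - ut t, mulVecE (At t)ᵀ (w t)⟫) ∂μ :=
          integral_add hGint ((he1int ℓ).add (he2int ℓ))
      _ = (∫ t, ⟪mulVecE (At t) (ut t), w t⟫ ∂μ) +
            ((∫ t, ⟪mulVecE (Al ℓ t - At t) (ul ℓ t), w t⟫ ∂μ) +
              ∫ t, ⟪ul ℓ t - ut t, mulVecE (At t)ᵀ (w t)⟫ ∂μ) := by
          rw [integral_add (he1int ℓ) (he2int ℓ)]
  -- `E1 → 0`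
  have hE1 : Tendsto E1 atTop (𝓝 0) := by
    apply squeeze_zero_norm
      (a := fun ℓ => Real.sqrt (∫ t, frobNorm (Al ℓ t - At t)^2 ∂μ) *
        Real.sqrt (∫ t, (M * ‖w t‖)^2 ∂μ))
    · intro ℓ
      have step1 : ‖E1 ℓ‖ ≤ ∫ t, ‖⟪mulVecE (Al ℓ t - At t) (ul ℓ t), w t⟫‖ ∂μ :=
        norm_integral_le_integral_norm _
      have step2 : ∫ t, ‖⟪mulVecE (Al ℓ t - At t) (ul ℓ t), w t⟫‖ ∂μ ≤
          ∫ t, frobNorm (Al ℓ t - At t) * (M * ‖w t‖) ∂μ := by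
        refine integral_mono_ae (he1int ℓ).norm
          (integrable_mul_of_memL2 (hfrobD ℓ) (hwn.const_mul M)) ?_
        filter_upwards [hbound ℓ] with t hb
        calc ‖⟪mulVecE (Al ℓ t - At t) (ul ℓ t), w t⟫‖
            ≤ ‖mulVecE (Al ℓ t - At t) (ul ℓ t)‖ * ‖w t‖ := norm_inner_le_norm _ _
          _ ≤ (frobNorm (Al ℓ t - At t) * ‖ul ℓ t‖) * ‖w t‖ :=
              mul_le_mul_of_nonneg_right (norm_mulVecE_le _ _) (norm_nonneg _)
          _ ≤ frobNorm (Al ℓ t - At t) * (M * ‖w t‖) := by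
              nlinarith [mul_nonneg (mul_nonneg (frobNorm_nonneg (Al ℓ t - At t))
                (norm_nonneg (w t))) (sub_nonneg.2 hb)]
      have step3 : ∫ t, frobNorm (Al ℓ t - At t) * (M * ‖w t‖) ∂μ ≤
          Real.sqrt (∫ t, frobNorm (Al ℓ t - At t)^2 ∂μ) *
            Real.sqrt (∫ t, (M * ‖w t‖)^2 ∂μ) :=
        integral_mul_le_sqrt (Eventually.of_forall fun t => frobNorm_nonneg _)
          (Eventually.of_forall fun t => mul_nonneg hM (norm_nonneg _))
          (hfrobD ℓ) (hwn.const_mul M)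
      exact step1.trans (step2.trans step3)
    · have h0 : Tendsto (fun ℓ => ∫ t, frobNorm (Al ℓ t - At t)^2 ∂μ) atTop (𝓝 0) := hAconv
      have h1 := (Real.continuous_sqrt.tendsto 0).comp h0
      simpa [Real.sqrt_zero] using
        h1.mul_const (Real.sqrt (∫ t, (M * ‖w t‖)^2 ∂μ))
  -- `E2 → 0` via truncation
  have hE2 : Tendsto E2 atTop (𝓝 0) := by
    set θ : ℕ → ℝ → ℝ := fun k t => min 1 ((k:ℝ) / (1 + frobNorm (At t))) with hθdef
    have hθ0 : ∀ k t, 0 ≤ θ k t := fun k t =>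
      le_min (by norm_num) (div_nonneg (Nat.cast_nonneg k)
        (by have := frobNorm_nonneg (At t); linarith))
    have hθ1 : ∀ k t, θ k t ≤ 1 := fun k t => min_le_left _ _
    have hθfrob : ∀ k t, θ k t * frobNorm (At t) ≤ (k:ℝ) := by
      intro k t
      have hf0 := frobNorm_nonneg (At t)
      have hd : (0:ℝ) < 1 + frobNorm (At t) := by linarith
      have hk0 : (0:ℝ) ≤ (k:ℝ) := Nat.cast_nonneg k
      calc θ k t * frobNorm (At t)
          ≤ ((k:ℝ)/(1 + frobNorm (At t))) * frobNorm (At t) :=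
            mul_le_mul_of_nonneg_right (min_le_right _ _) hf0
        _ ≤ (k:ℝ) := by
            rw [div_mul_eq_mul_div, div_le_iff₀ hd]
            nlinarith
    have hθmeas : ∀ k, AEStronglyMeasurable (θ k) μ := by
      intro k
      have hc : Continuous (fun A : Matrix (Fin m) (Fin n) ℝ =>
          min 1 ((k:ℝ) / (1 + frobNorm A))) := by
        apply continuous_const.min
        apply continuous_const.div (continuous_const.add continuous_frobNorm)
        intro A
        have := frobNorm_nonneg A
        intro h
        simp only [Pi.add_apply] at h
        linarith [h]
      exact hc.comp_aestronglyMeasurable hAtmeas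
    set vk : ℕ → ℝ → EuclideanSpace ℝ (Fin n) :=
      fun k t => θ k t • mulVecE (At t)ᵀ (w t) with hvkdef
    have hvfbd : ∀ t, ‖mulVecE (At t)ᵀ (w t)‖ ≤ frobNorm (At t) * ‖w t‖ := by
      intro t
      have := norm_mulVecE_le (At t)ᵀ (w t)
      rwa [frobNorm_transpose] at this
    have hvknorm : ∀ k t, ‖vk k t‖ ≤ (k:ℝ) * ‖w t‖ := by
      intro k t
      rw [hvkdef]
      simp only [norm_smul, Real.norm_eq_abs, abs_of_nonneg (hθ0 k t)]
      calc θ k t * ‖mulVecE (At t)ᵀ (w t)‖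
          ≤ θ k t * (frobNorm (At t) * ‖w t‖) :=
            mul_le_mul_of_nonneg_left (hvfbd t) (hθ0 k t)
        _ = (θ k t * frobNorm (At t)) * ‖w t‖ := by ring
        _ ≤ (k:ℝ) * ‖w t‖ :=
            mul_le_mul_of_nonneg_right (hθfrob k t) (norm_nonneg _)
    have hvkmeas : ∀ k, AEStronglyMeasurable (vk k) μ := fun k =>
      (hθmeas k).smul hvfull_meas
    have hvkL2 : ∀ k, MemLp (vk k) 2 μ := by
      intro k
      refine (hwn.const_mul (k:ℝ)).of_le (hvkmeas k) ?_
      refine Eventually.of_forall fun t => ?_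
      have := hvknorm k t
      have h2 : ‖(k:ℝ) * ‖w t‖‖ = (k:ℝ) * ‖w t‖ := by
        rw [Real.norm_eq_abs, abs_of_nonneg (mul_nonneg (Nat.cast_nonneg k) (norm_nonneg _))]
      rw [h2]; exact this
    set Gk : ℕ → ℕ → ℝ := fun k ℓ => ∫ t, ⟪ul ℓ t - ut t, vk k t⟫ ∂μ with hGkdef
    have hGk : ∀ k, Tendsto (Gk k) atTop (𝓝 0) := by
      intro k
      have h := hweak (vk k) (hvkL2 k)
      have heq : ∀ ℓ, Gk k ℓ =
          (∫ t, ⟪ul ℓ t, vk k t⟫ ∂μ) - ∫ t, ⟪ut t, vk k t⟫ ∂μ := by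
        intro ℓ
        rw [hGkdef]
        rw [← integral_sub (inner_integrable' (hul ℓ) (hvkL2 k))
          (inner_integrable' hut (hvkL2 k))]
        exact integral_congr_ae (Eventually.of_forall fun t => inner_sub_left _ _ _)
      have h2 := h.sub (tendsto_const_nhds (x := ∫ t, ⟪ut t, vk k t⟫ ∂μ))
      rw [sub_self] at h2
      exact h2.congr fun ℓ => (heq ℓ).symm
    set c : ℕ → ℝ := fun k =>
      (2*M) * ∫ t, (1 - θ k t) * (frobNorm (At t) * ‖w t‖) ∂μ with hcdef
    have hfrobw_int : Integrable (fun t => frobNorm (At t) * ‖w t‖) μ :=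
      integrable_mul_of_memL2 hfrobAt hwn
    have hck_int : ∀ k, Integrable (fun t => (1 - θ k t) * (frobNorm (At t) * ‖w t‖)) μ := by
      intro k
      refine hfrobw_int.bdd_mul (aestronglyMeasurable_const.sub (hθmeas k)) (c := 1) (Eventually.of_forall fun t => ?_)
      rw [Real.norm_eq_abs, abs_of_nonneg (by have := hθ1 k t; linarith)]
      have := hθ0 k t; linarith
    have hdiff : ∀ k ℓ, |E2 ℓ - Gk k ℓ| ≤ c k := by
      intro k ℓ
      have hinner_int : Integrable (fun t => ⟪ul ℓ t - ut t, vk k t⟫) μ :=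
        inner_integrable' ((hul ℓ).sub hut) (hvkL2 k)
      have hsub : E2 ℓ - Gk k ℓ =
          ∫ t, ⟪ul ℓ t - ut t, mulVecE (At t)ᵀ (w t) - vk k t⟫ ∂μ := by
        rw [hE2def, hGkdef]
        rw [← integral_sub (he2int ℓ) hinner_int]
        exact integral_congr_ae
          (Eventually.of_forall fun t => (inner_sub_right _ _ _).symm)
      rw [hsub]
      have hb1 : |∫ t, ⟪ul ℓ t - ut t, mulVecE (At t)ᵀ (w t) - vk k t⟫ ∂μ| ≤
          ∫ t, ‖⟪ul ℓ t - ut t, mulVecE (At t)ᵀ (w t) - vk k t⟫‖ ∂μ := by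
        rw [← Real.norm_eq_abs]
        exact norm_integral_le_integral_norm _
      have hzint : Integrable
          (fun t => ⟪ul ℓ t - ut t, mulVecE (At t)ᵀ (w t) - vk k t⟫) μ :=
        ((he2int ℓ).sub hinner_int).congr
          (Eventually.of_forall fun t => (inner_sub_right _ _ _).symm)
      have hb2 : ∫ t, ‖⟪ul ℓ t - ut t, mulVecE (At t)ᵀ (w t) - vk k t⟫‖ ∂μ ≤
          ∫ t, (2*M) * ((1 - θ k t) * (frobNorm (At t) * ‖w t‖)) ∂μ := by
        refine integral_mono_ae hzint.norm ((hck_int k).const_mul (2*M)) ?_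
        filter_upwards [hbound ℓ, hutM] with t h1 h2
        have hz : mulVecE (At t)ᵀ (w t) - vk k t =
            (1 - θ k t) • mulVecE (At t)ᵀ (w t) := by
          rw [hvkdef, sub_smul, one_smul]
        have hd : ‖ul ℓ t - ut t‖ ≤ 2*M := by
          calc ‖ul ℓ t - ut t‖ ≤ ‖ul ℓ t‖ + ‖ut t‖ := norm_sub_le _ _
            _ ≤ 2*M := by linarith
        have hθn : (0:ℝ) ≤ 1 - θ k t := by have := hθ1 k t; linarith
        have hznorm : ‖mulVecE (At t)ᵀ (w t) - vk k t‖ ≤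
            (1 - θ k t) * (frobNorm (At t) * ‖w t‖) := by
          rw [hz, norm_smul, Real.norm_eq_abs, abs_of_nonneg hθn]
          exact mul_le_mul_of_nonneg_left (hvfbd t) hθn
        calc ‖⟪ul ℓ t - ut t, mulVecE (At t)ᵀ (w t) - vk k t⟫‖
            ≤ ‖ul ℓ t - ut t‖ * ‖mulVecE (At t)ᵀ (w t) - vk k t‖ :=
              norm_inner_le_norm _ _
          _ ≤ (2*M) * ((1 - θ k t) * (frobNorm (At t) * ‖w t‖)) := by
              apply mul_le_mul hd hznorm (norm_nonneg _) (by linarith)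
      calc |∫ t, ⟪ul ℓ t - ut t, mulVecE (At t)ᵀ (w t) - vk k t⟫ ∂μ|
          ≤ ∫ t, ‖⟪ul ℓ t - ut t, mulVecE (At t)ᵀ (w t) - vk k t⟫‖ ∂μ := hb1
        _ ≤ ∫ t, (2*M) * ((1 - θ k t) * (frobNorm (At t) * ‖w t‖)) ∂μ := hb2
        _ = c k := integral_const_mul _ _
    have hc0 : Tendsto c atTop (𝓝 0) := by
      have hlim : ∀ᵐ t ∂μ, Tendsto
          (fun k => (1 - θ k t) * (frobNorm (At t) * ‖w t‖)) atTop (𝓝 0) := by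
        refine Eventually.of_forall fun t => ?_
        have hev : ∀ᶠ k in atTop,
            (0:ℝ) = (1 - θ k t) * (frobNorm (At t) * ‖w t‖) := by
          filter_upwards [eventually_ge_atTop ⌈(1:ℝ) + frobNorm (At t)⌉₊] with k hk
          have hd : (0:ℝ) < 1 + frobNorm (At t) := by
            have := frobNorm_nonneg (At t); linarith
          have h1 : (1:ℝ) + frobNorm (At t) ≤ (k:ℝ) :=
            le_trans (Nat.le_ceil _) (Nat.cast_le.2 hk)
          have hθeq : θ k t = 1 := min_eq_left ((one_le_div hd).2 h1)
          rw [hθeq]; ring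
        exact Tendsto.congr' hev tendsto_const_nhds
      have hbd : ∀ k, ∀ᵐ t ∂μ,
          ‖(1 - θ k t) * (frobNorm (At t) * ‖w t‖)‖ ≤ frobNorm (At t) * ‖w t‖ := by
        intro k
        refine Eventually.of_forall fun t => ?_
        have h0 := hθ0 k t; have h1 := hθ1 k t
        have hfw : 0 ≤ frobNorm (At t) * ‖w t‖ :=
          mul_nonneg (frobNorm_nonneg _) (norm_nonneg _)
        rw [Real.norm_eq_abs, abs_mul, abs_of_nonneg (by linarith : (0:ℝ) ≤ 1 - θ k t),
          abs_of_nonneg hfw]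
        nlinarith
      have h := tendsto_integral_of_dominated_convergence
        (fun t => frobNorm (At t) * ‖w t‖)
        (fun k => (hck_int k).1) hfrobw_int hbd hlim
      rw [hcdef]
      simpa [mul_zero] using h.const_mul (2*M)
    exact tendsto_of_approx hGk hc0 hdiff
  have hfinal := (tendsto_const_nhds
    (x := ∫ t, ⟪mulVecE (At t) (ut t), w t⟫ ∂μ)).add (hE1.add hE2)
  have hfinal2 := hfinal.congr fun ℓ => (hint_eq ℓ).symm
  simpa using hfinal2
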